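/- Let x_1, ..., x_n ∈ ℝ^d with ‖x_i‖_2 ≤ 1 for all i, and let A = I + ∑_{i=1}^n x_i x_iᵀ. Then det(A) ≤ (1 + n/d)^d; equivalently, log det(A) ≤ d · log(1 + n/d). -/

import Mathlib

open Matrix Finset

noncomputable def l2norm {d : ℕ} (x : Fin d → ℝ) : ℝ :=
  Real.sqrt (∑ i, x i ^ 2)

lemma trace_eq_sum_eig {d : ℕ} {A : Matrix (Fin d) (Fin d) ℝ} (hA : A.IsHermitian) :
    A.trace = ∑ i, hA.eigenvalues i := by
  simpa using hA.trace_eq_sum_eigenvalues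

theorem stmt12 {d : ℕ} (n : ℕ) (x : ℕ → Fin d → ℝ)
    (hx : ∀ i < n, l2norm (x i) ≤ 1)
    (A : Matrix (Fin d) (Fin d) ℝ)
    (hA : A = 1 + ∑ i ∈ Finset.range n, vecMulVec (x i) (x i)) :
    A.det ≤ (1 + (n : ℝ) / d) ^ d ∧
      Real.log A.det ≤ (d : ℝ) * Real.log (1 + (n : ℝ) / d) := by
  have hbase : (1:ℝ) ≤ 1 + (n : ℝ) / d := by
    have : (0:ℝ) ≤ (n:ℝ)/d := by positivity
    linarith
  -- positive semidefiniteness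
  have hpsd : A.PosSemidef := by
    rw [hA]
    apply Matrix.PosSemidef.add
    · exact Matrix.PosSemidef.one
    · refine Finset.sum_induction _ Matrix.PosSemidef (fun a b ha hb => ha.add hb)
        Matrix.PosSemidef.zero (fun i _ => ?_)
      have : vecMulVec (x i) (x i) = replicateCol Unit (x i) * (replicateCol Unit (x i))ᴴ := by
        rw [conjTranspose_replicateCol, vecMulVec_eq Unit]
        simp
      rw [this]
      exact posSemidef_self_mul_conjTranspose _
  have hherm := hpsd.isHermitian
  set lam := hherm.eigenvalues with hlam
  have hnn : ∀ i, 0 ≤ lam i := fun i => hpsd.eigenvalues_nonneg i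
  have hdet : A.det = ∏ i, lam i := by
    simpa using hherm.det_eq_prod_eigenvalues
  have hdet0 : 0 ≤ A.det := by
    rw [hdet]; exact Finset.prod_nonneg fun i _ => hnn i
  -- trace bound
  have htr : ∑ i, lam i ≤ (d : ℝ) + n := by
    rw [← trace_eq_sum_eig hherm, hA, Matrix.trace_add, Matrix.trace_one]
    have : ∀ i ∈ Finset.range n, (vecMulVec (x i) (x i)).trace ≤ 1 := by
      intro i hi
      have h1 : (vecMulVec (x i) (x i)).trace = ∑ j, x i j ^ 2 := by
        simp [Matrix.trace, Matrix.diag, vecMulVec_apply, sq]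
      rw [h1]
      have h2 := hx i (Finset.mem_range.mp hi)
      rw [l2norm] at h2
      have h3 : (0:ℝ) ≤ ∑ j, x i j ^ 2 := by positivity
      nlinarith [Real.sq_sqrt h3, Real.sqrt_nonneg (∑ j, x i j ^ 2)]
    have := Matrix.trace_sum (Finset.range n) (fun i => vecMulVec (x i) (x i))
    rw [this]
    have hs : ∑ i ∈ Finset.range n, (vecMulVec (x i) (x i)).trace ≤ (n:ℝ) := by
      calc ∑ i ∈ Finset.range n, (vecMulVec (x i) (x i)).trace ≤ ∑ _i ∈ Finset.range n, (1:ℝ) :=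
            Finset.sum_le_sum ‹_›
        _ = n := by simp
    simp only [Fintype.card_fin]
    linarith
  rcases Nat.eq_zero_or_pos d with hd0 | hdpos
  · subst hd0
    constructor
    · rw [Matrix.det_isEmpty, pow_zero]
    · rw [Matrix.det_isEmpty, Real.log_one, Nat.cast_zero, zero_mul]
  · have hdR : (0:ℝ) < d := by exact_mod_cast hdpos
    -- AM-GM
    have hamgm : ∏ i, lam i ≤ ((∑ i, lam i) / d) ^ d := by
      have key := Real.geom_mean_le_arith_mean (Finset.univ : Finset (Fin d))
        (fun _ => (1:ℝ)) lam (fun _ _ => zero_le_one) (by simp [hdR]) (fun i _ => hnn i)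
      simp only [one_mul, Real.rpow_one, Finset.sum_const, Finset.card_univ, Fintype.card_fin,
        nsmul_eq_mul, mul_one] at key
      have hP : (0:ℝ) ≤ ∏ i, lam i := Finset.prod_nonneg fun i _ => hnn i
      have h1 : ((∏ i, lam i) ^ ((d:ℝ)⁻¹)) ^ d ≤ ((∑ i, lam i) / d) ^ d := by
        apply pow_le_pow_left₀ (Real.rpow_nonneg hP _) key
      rwa [← Real.rpow_natCast ((∏ i, lam i) ^ ((d:ℝ)⁻¹)) d, ← Real.rpow_mul hP,
        inv_mul_cancel₀ hdR.ne', Real.rpow_one] at h1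
    have hmain : A.det ≤ (1 + (n : ℝ) / d) ^ d := by
      rw [hdet]
      calc ∏ i, lam i ≤ ((∑ i, lam i) / d) ^ d := hamgm
        _ ≤ (1 + (n : ℝ) / d) ^ d := by
            apply pow_le_pow_left₀ (div_nonneg (Finset.sum_nonneg fun i _ => hnn i) hdR.le)
            rw [div_le_iff₀ hdR]
            have he : (1+(n:ℝ)/d)*d = d + n := by field_simp
            linarith
    refine ⟨hmain, ?_⟩
    have hlog : Real.log A.det ≤ Real.log ((1 + (n : ℝ) / d) ^ d) := by
      rcases eq_or_lt_of_le hdet0 with h | h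
      · rw [← h, Real.log_zero]
        apply Real.log_nonneg
        exact one_le_pow₀ hbase
      · exact Real.log_le_log h hmain
    rwa [Real.log_pow] at hlog
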